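/- Assume m > c, let u∞ be the unique point with F(u∞) = 0 and y∞ = Hu∞ + d. Let (ũ_k) be generated by the centralized update ũ_{k+1} = ũ_k − η ∇Φ̃(ũ_k) with any step size η > 0 and any ũ₀ ∈ ℝ^N. Then for every k ≥ 0, ‖ũ_k − u∞‖² ≤ ρ̃^k ‖ũ₀ − u∞‖² + (η + η²) ‖(Hᵀ − H_diag) ∇Φ²(y∞)‖² · Σ_{j=0}^{k−1} ρ̃^j, where ρ̃ = (1 − 2mη + L²η²)(1 + η) ≥ 0, m = m_u + σ_min(H)² m_y, and L = L_u + σ_max(H)² L_y. -/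

import Mathlib

set_option maxHeartbeats 1000000


open RealInnerProductSpace

/-- Largest singular value of a square matrix: the operator 2-norm of `v ↦ M v`
on Euclidean space. -/
noncomputable def sigmaMax {N : ℕ} (M : Matrix (Fin N) (Fin N) ℝ) : ℝ :=
  ‖Matrix.toEuclideanCLM (𝕜 := ℝ) M‖

/-- Smallest singular value of a square matrix: the infimum of `‖M v‖` over the
unit sphere of Euclidean space. -/
noncomputable def sigmaMin {N : ℕ} (M : Matrix (Fin N) (Fin N) ℝ) : ℝ :=
  sInf ((fun v : EuclideanSpace ℝ (Fin N) => ‖Matrix.toEuclideanCLM (𝕜 := ℝ) M v‖) '' {v | ‖v‖ = 1})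

/-- Matrix-vector multiplication as a map on Euclidean space. -/
noncomputable def mulV {N : ℕ} (M : Matrix (Fin N) (Fin N) ℝ) (v : EuclideanSpace ℝ (Fin N)) :
    EuclideanSpace ℝ (Fin N) :=
  Matrix.toEuclideanCLM (𝕜 := ℝ) M v

/-- centralized gradient trajectory measured against the decentralized
stationary point. With `∇Φ̃(u) = ∇Φ¹(u) + Hᵀ∇Φ²(Hu + d)` and
`ρ̃ = (1 − 2mη + L²η²)(1 + η) ≥ 0`, the iterates of `ũ_{k+1} = ũ_k − η∇Φ̃(ũ_k)` satisfy
`‖ũ_k − u∞‖² ≤ ρ̃^k‖ũ₀ − u∞‖² + (η + η²)‖(Hᵀ − H_diag)∇Φ²(y∞)‖² Σ_{j<k} ρ̃^j`. -/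
theorem stmt9 {N : ℕ} (hN : 0 < N)
(H : Matrix (Fin N) (Fin N) ℝ) (d : EuclideanSpace ℝ (Fin N))
    (Φ1 Φ2 : EuclideanSpace ℝ (Fin N) → ℝ)
    (mu Lu my Ly : ℝ)
    (hmu : 0 < mu) (hmuLu : mu ≤ Lu) (hmy : 0 < my) (hmyLy : my ≤ Ly)
    (hΦ1diff : Differentiable ℝ Φ1) (hΦ2diff : Differentiable ℝ Φ2)
    (hΦ1mono : ∀ a b, mu * ‖a - b‖ ^ 2 ≤ ⟪gradient Φ1 a - gradient Φ1 b, a - b⟫)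
    (hΦ1lip : ∀ a b, ‖gradient Φ1 a - gradient Φ1 b‖ ≤ Lu * ‖a - b‖)
    (hΦ2mono : ∀ a b, my * ‖a - b‖ ^ 2 ≤ ⟪gradient Φ2 a - gradient Φ2 b, a - b⟫)
    (hΦ2lip : ∀ a b, ‖gradient Φ2 a - gradient Φ2 b‖ ≤ Ly * ‖a - b‖)
    (Hdiag : Matrix (Fin N) (Fin N) ℝ)
    (hHdiag : Hdiag = Matrix.diagonal (fun i => H i i))
    (F : EuclideanSpace ℝ (Fin N) → EuclideanSpace ℝ (Fin N))
    (hF : ∀ u, F u = gradient Φ1 u + mulV Hdiag (gradient Φ2 (mulV H u + d)))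
    (m c L : ℝ)
    (hm : m = mu + sigmaMin H ^ 2 * my)
    (hc : c = sigmaMax (H - Hdiag) * sigmaMax H * Ly)
    (hL : L = Lu + sigmaMax H ^ 2 * Ly)
    (hmc : m > c)
    (uinf yinf : EuclideanSpace ℝ (Fin N))
    (huinf : F uinf = 0)
    (hyinf : yinf = mulV H uinf + d)
    (η : ℝ) (hη : 0 < η)
    (ut : ℕ → EuclideanSpace ℝ (Fin N))
    (hiter : ∀ k, ut (k + 1) =
      ut k - η • (gradient Φ1 (ut k) + mulV H.transpose (gradient Φ2 (mulV H (ut k) + d)))) :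
    0 ≤ (1 - 2 * m * η + L ^ 2 * η ^ 2) * (1 + η) ∧
      ∀ k : ℕ,
        ‖ut k - uinf‖ ^ 2 ≤
          ((1 - 2 * m * η + L ^ 2 * η ^ 2) * (1 + η)) ^ k * ‖ut 0 - uinf‖ ^ 2 +
            (η + η ^ 2) * ‖mulV (H.transpose - Hdiag) (gradient Φ2 yinf)‖ ^ 2 *
              ∑ j ∈ Finset.range k, ((1 - 2 * m * η + L ^ 2 * η ^ 2) * (1 + η)) ^ j := by
  classical
  have hLy : (0:ℝ) < Ly := lt_of_lt_of_le hmy hmyLy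
  -- The matrix `H` as a continuous linear map on Euclidean space
  set A : EuclideanSpace ℝ (Fin N) →L[ℝ] EuclideanSpace ℝ (Fin N) :=
    Matrix.toEuclideanCLM (𝕜 := ℝ) H with hA
  have hadj : Matrix.toEuclideanCLM (𝕜 := ℝ) H.transpose = ContinuousLinearMap.adjoint A := by
    rw [← ContinuousLinearMap.star_eq_adjoint, hA, ← map_star]
    have hst : star H = H.transpose := by
      ext i j
      simp [Matrix.star_eq_conjTranspose, Matrix.conjTranspose_apply]
    rw [hst]
  have hadj_norm : ‖ContinuousLinearMap.adjoint A‖ = ‖A‖ :=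
    ContinuousLinearMap.adjoint.norm_map A
  have hσmaxA : sigmaMax H = ‖A‖ := rfl
  -- sigmaMin facts
  have hσmin_nonneg : 0 ≤ sigmaMin H := by
    apply le_csInf
    · exact ⟨_, ⟨EuclideanSpace.single ⟨0, hN⟩ (1 : ℝ), by simp, rfl⟩⟩
    · rintro x ⟨v, hv, rfl⟩; positivity
  have hσmin : ∀ v : EuclideanSpace ℝ (Fin N), sigmaMin H * ‖v‖ ≤ ‖A v‖ := by
    intro v
    rcases eq_or_ne v 0 with rfl | hv
    · simp
    · have hvn : (0:ℝ) < ‖v‖ := norm_pos_iff.mpr hv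
      have h1 : sigmaMin H ≤ ‖Matrix.toEuclideanCLM (𝕜 := ℝ) H ((‖v‖)⁻¹ • v)‖ := by
        apply csInf_le
        · exact ⟨0, by rintro x ⟨w, hw, rfl⟩; positivity⟩
        · exact ⟨(‖v‖)⁻¹ • v, by
            simp [norm_smul, abs_of_nonneg (inv_nonneg.mpr (norm_nonneg v)),
              inv_mul_cancel₀ hvn.ne'], rfl⟩
      have h2 : ‖A ((‖v‖)⁻¹ • v)‖ = (‖v‖)⁻¹ * ‖A v‖ := by
        rw [map_smul, norm_smul, Real.norm_eq_abs, abs_of_nonneg (inv_nonneg.mpr (norm_nonneg v))]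
      rw [show (Matrix.toEuclideanCLM (𝕜 := ℝ) H) = A from rfl, h2] at h1
      calc sigmaMin H * ‖v‖ ≤ ((‖v‖)⁻¹ * ‖A v‖) * ‖v‖ :=
            mul_le_mul_of_nonneg_right h1 (norm_nonneg v)
        _ = ‖A v‖ := by field_simp
  have hσmax : ∀ v : EuclideanSpace ℝ (Fin N), ‖A v‖ ≤ sigmaMax H * ‖v‖ := fun v =>
    A.le_opNorm v
  -- the full gradient map
  set G : EuclideanSpace ℝ (Fin N) → EuclideanSpace ℝ (Fin N) := fun u =>
    gradient Φ1 u + mulV H.transpose (gradient Φ2 (mulV H u + d)) with hG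
  have hmulVT : ∀ v, mulV H.transpose v = (ContinuousLinearMap.adjoint A) v := by
    intro v; rw [mulV, hadj]
  have hGdiff : ∀ a b, G a - G b = (gradient Φ1 a - gradient Φ1 b) +
      (ContinuousLinearMap.adjoint A) (gradient Φ2 (A a + d) - gradient Φ2 (A b + d)) := by
    intro a b
    simp only [hG, hmulVT, map_sub]
    have : ∀ u, mulV H u = A u := fun u => rfl
    simp only [this]
    abel
  have hAdiff : ∀ a b : EuclideanSpace ℝ (Fin N), (A a + d) - (A b + d) = A (a - b) := by
    intro a b; rw [map_sub]; abel
  -- strong monotonicity of G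
  have hGmono : ∀ a b, m * ‖a - b‖ ^ 2 ≤ ⟪G a - G b, a - b⟫ := by
    intro a b
    rw [hGdiff, inner_add_left, ContinuousLinearMap.adjoint_inner_left]
    have h1 := hΦ1mono a b
    have h2 := hΦ2mono (A a + d) (A b + d)
    rw [hAdiff] at h2
    have h3 : sigmaMin H * ‖a - b‖ ≤ ‖A (a - b)‖ := hσmin _
    have h4 : (sigmaMin H * ‖a - b‖) ^ 2 ≤ ‖A (a - b)‖ ^ 2 := by
      have := mul_nonneg hσmin_nonneg (norm_nonneg (a - b))
      nlinarith [norm_nonneg (A (a - b))]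
    rw [hm]
    nlinarith [mul_le_mul_of_nonneg_left h4 hmy.le]
  -- Lipschitz continuity of G
  have hGlip : ∀ a b, ‖G a - G b‖ ≤ L * ‖a - b‖ := by
    intro a b
    rw [hGdiff]
    have hw : ‖gradient Φ2 (A a + d) - gradient Φ2 (A b + d)‖ ≤ Ly * ‖A (a - b)‖ := by
      have := hΦ2lip (A a + d) (A b + d)
      rwa [hAdiff] at this
    have h2 : ‖(ContinuousLinearMap.adjoint A)
        (gradient Φ2 (A a + d) - gradient Φ2 (A b + d))‖ ≤ ‖A‖ * (Ly * (‖A‖ * ‖a - b‖)) := by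
      calc ‖(ContinuousLinearMap.adjoint A) (gradient Φ2 (A a + d) - gradient Φ2 (A b + d))‖
          ≤ ‖ContinuousLinearMap.adjoint A‖ *
            ‖gradient Φ2 (A a + d) - gradient Φ2 (A b + d)‖ :=
            ContinuousLinearMap.le_opNorm _ _
        _ = ‖A‖ * ‖gradient Φ2 (A a + d) - gradient Φ2 (A b + d)‖ := by rw [hadj_norm]
        _ ≤ ‖A‖ * (Ly * ‖A (a - b)‖) :=
            mul_le_mul_of_nonneg_left hw (norm_nonneg A)
        _ ≤ ‖A‖ * (Ly * (‖A‖ * ‖a - b‖)) := by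
            have := hσmax (a - b)
            rw [hσmaxA] at this
            exact mul_le_mul_of_nonneg_left
              (mul_le_mul_of_nonneg_left this hLy.le) (norm_nonneg A)
    calc ‖(gradient Φ1 a - gradient Φ1 b) + (ContinuousLinearMap.adjoint A)
          (gradient Φ2 (A a + d) - gradient Φ2 (A b + d))‖
        ≤ ‖gradient Φ1 a - gradient Φ1 b‖ + ‖(ContinuousLinearMap.adjoint A)
          (gradient Φ2 (A a + d) - gradient Φ2 (A b + d))‖ := norm_add_le _ _
      _ ≤ Lu * ‖a - b‖ + ‖A‖ * (Ly * (‖A‖ * ‖a - b‖)) := add_le_add (hΦ1lip a b) h2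
      _ = L * ‖a - b‖ := by rw [hL, hσmaxA]; ring
  -- m ≤ L
  have hmL : m ≤ L := by
    have hv : ‖(EuclideanSpace.single ⟨0, hN⟩ (1:ℝ) : EuclideanSpace ℝ (Fin N)) - 0‖ = 1 := by
      simp
    have h1 := hGmono (EuclideanSpace.single ⟨0, hN⟩ (1:ℝ)) 0
    have h2 := hGlip (EuclideanSpace.single ⟨0, hN⟩ (1:ℝ)) 0
    have h3 := real_inner_le_norm (G (EuclideanSpace.single ⟨0, hN⟩ (1:ℝ)) - G 0)
      ((EuclideanSpace.single ⟨0, hN⟩ (1:ℝ) : EuclideanSpace ℝ (Fin N)) - 0)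
    rw [hv] at h1 h2 h3
    nlinarith
  have hρ1 : 0 ≤ 1 - 2 * m * η + L ^ 2 * η ^ 2 := by
    nlinarith [sq_nonneg (1 - L * η), mul_le_mul_of_nonneg_right hmL hη.le]
  have h1η : (0:ℝ) ≤ 1 + η := by linarith
  -- the bias term
  have he : G uinf = mulV (H.transpose - Hdiag) (gradient Φ2 yinf) := by
    have h0 : gradient Φ1 uinf + mulV Hdiag (gradient Φ2 (mulV H uinf + d)) = 0 := by
      rw [← hF]; exact huinf
    have hsplit : mulV (H.transpose - Hdiag) (gradient Φ2 (mulV H uinf + d)) =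
        mulV H.transpose (gradient Φ2 (mulV H uinf + d)) -
          mulV Hdiag (gradient Φ2 (mulV H uinf + d)) := by
      simp [mulV, map_sub, ContinuousLinearMap.sub_apply]
    rw [hyinf, hsplit]
    show gradient Φ1 uinf + mulV H.transpose (gradient Φ2 (mulV H uinf + d)) = _
    have hg1 : gradient Φ1 uinf = - mulV Hdiag (gradient Φ2 (mulV H uinf + d)) :=
      eq_neg_of_add_eq_zero_left h0
    rw [hg1]
    abel
  -- the one-step contraction
  have key : ∀ k, ‖ut (k + 1) - uinf‖ ^ 2 ≤
      ((1 - 2 * m * η + L ^ 2 * η ^ 2) * (1 + η)) * ‖ut k - uinf‖ ^ 2 +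
        (η + η ^ 2) * ‖mulV (H.transpose - Hdiag) (gradient Φ2 yinf)‖ ^ 2 := by
    intro k
    set x : EuclideanSpace ℝ (Fin N) := ut k - uinf with hx
    set g : EuclideanSpace ℝ (Fin N) := G (ut k) - G uinf with hg
    set e : EuclideanSpace ℝ (Fin N) := mulV (H.transpose - Hdiag) (gradient Φ2 yinf) with hev
    have hupd : ut (k + 1) - uinf = (x - η • g) - η • e := by
      rw [hiter k]
      have hGk : gradient Φ1 (ut k) + mulV H.transpose (gradient Φ2 (mulV H (ut k) + d)) =
          G (ut k) := rfl
      rw [hGk, show G (ut k) = g + e by rw [hg, he]; abel]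
      rw [hx, smul_add]
      abel
    have hmono : m * ‖x‖ ^ 2 ≤ ⟪g, x⟫ := hGmono (ut k) uinf
    have hlip : ‖g‖ ≤ L * ‖x‖ := hGlip (ut k) uinf
    have hgsq : ‖g‖ ^ 2 ≤ L ^ 2 * ‖x‖ ^ 2 := by nlinarith [norm_nonneg g, norm_nonneg x]
    have hA1 : ‖x - η • g‖ ^ 2 ≤ (1 - 2 * m * η + L ^ 2 * η ^ 2) * ‖x‖ ^ 2 := by
      have hexp := norm_sub_sq_real x (η • g)
      rw [real_inner_smul_right, norm_smul, Real.norm_eq_abs, abs_of_pos hη] at hexp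
      have hcomm : ⟪x, g⟫ = ⟪g, x⟫ := real_inner_comm g x
      rw [hexp]
      nlinarith [mul_le_mul_of_nonneg_left hmono hη.le,
        mul_le_mul_of_nonneg_left hgsq (sq_nonneg η), hcomm]
    have hB : ‖(x - η • g) - η • e‖ ^ 2 ≤
        (1 + η) * ‖x - η • g‖ ^ 2 + (η + η ^ 2) * ‖e‖ ^ 2 := by
      have hexp := norm_sub_sq_real (x - η • g) (η • e)
      rw [real_inner_smul_right, norm_smul, Real.norm_eq_abs, abs_of_pos hη] at hexp
      have h5 : -⟪x - η • g, e⟫ ≤ ‖x - η • g‖ * ‖e‖ := by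
        have := abs_real_inner_le_norm (x - η • g) e
        linarith [neg_abs_le ⟪x - η • g, e⟫, abs_nonneg ⟪x - η • g, e⟫,
          le_abs_self (-⟪x - η • g, e⟫), neg_le_abs ⟪x - η • g, e⟫]
      have h6 : 2 * (‖x - η • g‖ * ‖e‖) ≤ ‖x - η • g‖ ^ 2 + ‖e‖ ^ 2 := by
        nlinarith [sq_nonneg (‖x - η • g‖ - ‖e‖)]
      rw [hexp]
      nlinarith [mul_le_mul_of_nonneg_left h5 hη.le, mul_le_mul_of_nonneg_left h6 hη.le]
    calc ‖ut (k + 1) - uinf‖ ^ 2 = ‖(x - η • g) - η • e‖ ^ 2 := by rw [hupd]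
      _ ≤ (1 + η) * ‖x - η • g‖ ^ 2 + (η + η ^ 2) * ‖e‖ ^ 2 := hB
      _ ≤ (1 + η) * ((1 - 2 * m * η + L ^ 2 * η ^ 2) * ‖x‖ ^ 2) + (η + η ^ 2) * ‖e‖ ^ 2 :=
          add_le_add_left (mul_le_mul_of_nonneg_left hA1 h1η) _
      _ = ((1 - 2 * m * η + L ^ 2 * η ^ 2) * (1 + η)) * ‖x‖ ^ 2 + (η + η ^ 2) * ‖e‖ ^ 2 := by
          ring
  refine ⟨mul_nonneg hρ1 h1η, ?_⟩
  intro k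
  induction k with
  | zero => simp
  | succ k ih =>
    have hρ : 0 ≤ (1 - 2 * m * η + L ^ 2 * η ^ 2) * (1 + η) := mul_nonneg hρ1 h1η
    calc ‖ut (k + 1) - uinf‖ ^ 2
        ≤ ((1 - 2 * m * η + L ^ 2 * η ^ 2) * (1 + η)) * ‖ut k - uinf‖ ^ 2 +
          (η + η ^ 2) * ‖mulV (H.transpose - Hdiag) (gradient Φ2 yinf)‖ ^ 2 := key k
      _ ≤ ((1 - 2 * m * η + L ^ 2 * η ^ 2) * (1 + η)) *
            (((1 - 2 * m * η + L ^ 2 * η ^ 2) * (1 + η)) ^ k * ‖ut 0 - uinf‖ ^ 2 +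
              (η + η ^ 2) * ‖mulV (H.transpose - Hdiag) (gradient Φ2 yinf)‖ ^ 2 *
                ∑ j ∈ Finset.range k, ((1 - 2 * m * η + L ^ 2 * η ^ 2) * (1 + η)) ^ j) +
          (η + η ^ 2) * ‖mulV (H.transpose - Hdiag) (gradient Φ2 yinf)‖ ^ 2 :=
          add_le_add_left (mul_le_mul_of_nonneg_left ih hρ) _
      _ = ((1 - 2 * m * η + L ^ 2 * η ^ 2) * (1 + η)) ^ (k + 1) * ‖ut 0 - uinf‖ ^ 2 +
            (η + η ^ 2) * ‖mulV (H.transpose - Hdiag) (gradient Φ2 yinf)‖ ^ 2 *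
              ∑ j ∈ Finset.range (k + 1), ((1 - 2 * m * η + L ^ 2 * η ^ 2) * (1 + η)) ^ j := by
          rw [geom_sum_succ]
          ring
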